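/- Define S̄_n = Σ_{j∈ℤ} q^{4j²−j} [n choose ⌊(n+1)/2⌋ − 2j]_q. Then for all n ≥ 0, S̄_{n+2} − (1+q) S̄_{n+1} + (q − q^{2n+2}) S̄_n = 0. -/

import Mathlib

open LaurentPolynomial

/-- The Gaussian (q-)binomial coefficient `[n choose k]_q`, as a Laurent polynomial in `q`,
with the convention that it vanishes for `k < 0` or `k > n`.  Defined via the standard
Pascal-type recurrence `[n+1, k] = q^k [n, k] + [n, k-1]`. -/
noncomputable def qb : ℕ → ℤ → LaurentPolynomial ℤ
  | 0, k => if k = 0 then 1 else 0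
  | (n+1), k => T k * qb n k + qb n (k-1)

/-- The variable `q`. -/
noncomputable def q : LaurentPolynomial ℤ := T 1

/-- The Gaussian binomial coefficient in base `q²` (the paper's `\gaa`), i.e. the
Gaussian binomial coefficient with `q` replaced by `q²`, vanishing for `k < 0` or `k > n`. -/
noncomputable def qb2 : ℕ → ℤ → LaurentPolynomial ℤ
  | 0, k => if k = 0 then 1 else 0
  | (n+1), k => T (2 * k) * qb2 n k + qb2 n (k-1)

/-- `S̄ n = Σ_{j∈ℤ} q^{4j²−j} [n choose ⌊(n+1)/2⌋ − 2j]`, where the binomial is the paper's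
`\gaa`, the Gaussian binomial coefficient in base `q²`. -/
noncomputable def Sbar (n : ℕ) : LaurentPolynomial ℤ :=
  ∑ᶠ j : ℤ, T (4 * j ^ 2 - j) * qb2 n ((((n : ℤ) + 1) / 2) - 2 * j)

lemma qb2_eq_zero : ∀ (n : ℕ) (k : ℤ), (k < 0 ∨ (n : ℤ) < k) → qb2 n k = 0
  | 0, k, h => by simp only [qb2, ite_eq_right_iff]; intro hk; omega
  | (n+1), k, h => by
      rw [qb2, qb2_eq_zero n k (by push_cast at h ⊢; omega),
        qb2_eq_zero n (k-1) (by push_cast at h ⊢; omega)]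
      simp

lemma qb2_pascalB : ∀ (n : ℕ) (k : ℤ),
    qb2 (n+1) k = qb2 n k + T (2*((n:ℤ)+1-k)) * qb2 n (k-1)
  | 0, k => by
      rcases eq_or_ne k 0 with rfl | h0
      · norm_num [qb2]
      rcases eq_or_ne k 1 with rfl | h1
      · norm_num [qb2]
      · show T (2*k) * qb2 0 k + qb2 0 (k-1) = qb2 0 k + T (2*(0+1-k)) * qb2 0 (k-1)
        rw [show qb2 0 k = 0 by simp [qb2, h0],
          show qb2 0 (k-1) = 0 by simp [qb2]; omega]
        ring
  | (n+1), k => by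
      have e1 : qb2 (n+1+1) k
          = T (2*k) * (qb2 n k + T (2*((n:ℤ)+1-k)) * qb2 n (k-1)) + qb2 (n+1) (k-1) := by
        rw [← qb2_pascalB]; rfl
      have e2 : qb2 (n+1) k = T (2*k) * qb2 n k + qb2 n (k-1) := rfl
      have e3 : qb2 (n+1) (k-1) = T (2*(k-1)) * qb2 n (k-1) + qb2 n (k-1-1) := rfl
      have key : T (2*(k-1)) * qb2 n (k-1) + qb2 n (k-1-1)
          = qb2 n (k-1) + T (2*((n:ℤ)+1-(k-1))) * qb2 n (k-1-1) :=
        e3.symm.trans (qb2_pascalB n (k-1))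
      have h1 : (T (2*k) : LaurentPolynomial ℤ) * T (2*((n:ℤ)+1-k))
          = T (2*(((n:ℤ)+1)+1-k)) * T (2*(k-1)) := by
        rw [← T_add, ← T_add]; congr 1; ring
      rw [show 2*((n:ℤ)+1-(k-1)) = 2*(((n:ℤ)+1)+1-k) by ring] at key
      rw [e1, e2, e3]
      push_cast
      linear_combination key + qb2 n (k-1) * h1

lemma qb2_symm : ∀ (n : ℕ) (k : ℤ), qb2 n ((n:ℤ) - k) = qb2 n k
  | 0, k => by
      rcases eq_or_ne k 0 with rfl | h0
      · norm_num
      · rw [show qb2 0 k = 0 by simp [qb2, h0],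
          show qb2 0 (((0:ℕ):ℤ) - k) = 0 by simp [qb2, sub_eq_zero]; omega]
  | (n+1), k => by
      push_cast
      rw [show (↑n + 1 - k : ℤ) = ((n:ℤ)+1-k) from rfl, qb2_pascalB n ((n:ℤ)+1-k)]
      have : (n:ℤ) + 1 - ((n:ℤ)+1-k) = k := by ring
      rw [this]
      have e2 : (n:ℤ) + 1 - k - 1 = (n:ℤ) - k := by ring
      rw [e2, qb2_symm n k]
      have e3 : (n:ℤ) - k = (n:ℤ) - k := rfl
      have : qb2 n ((n:ℤ)+1-k) = qb2 n (k-1) := by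
        have := qb2_symm n (k-1)
        rwa [show (n:ℤ) - (k-1) = (n:ℤ)+1-k by ring] at this
      rw [this]
      show _ = T (2*k) * qb2 n k + qb2 n (k-1)
      ring

noncomputable def Ssum (n : ℕ) (a c : ℤ) : LaurentPolynomial ℤ :=
  ∑ᶠ j : ℤ, T (4*j^2 + a*j) * qb2 n (c - 2*j)

lemma support_finite (n : ℕ) (c : ℤ) (h : ℤ → LaurentPolynomial ℤ)
    (hz : ∀ j : ℤ, qb2 n (c - 2*j) = 0 → h j = 0) : (Function.support h).Finite := by
  apply Set.Finite.subset (Set.finite_Icc ((c - (n:ℤ))/2) (c/2))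
  intro j hj
  simp only [Function.mem_support] at hj
  simp only [Set.mem_Icc]
  by_contra hc
  exact hj (hz j (qb2_eq_zero n _ (by omega)))

lemma Ssum_pascalA (n : ℕ) (a c : ℤ) :
    Ssum (n+1) a c = T (2*c) * Ssum n (a-4) c + Ssum n a (c-1) := by
  unfold Ssum
  rw [mul_finsum' _ _ (support_finite n c _ (fun j hj => by rw [hj, mul_zero]))]
  rw [← finsum_add_distrib
    (support_finite n c _ (fun j hj => by rw [hj, mul_zero, mul_zero]))
    (support_finite n (c-1) _ (fun j hj => by rw [show c - 1 - 2*j = c - 2*j - 1 by ring] at hj ⊢; rw [hj, mul_zero]))]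
  refine finsum_congr fun j => ?_
  rw [show qb2 (n+1) (c - 2*j) = T (2*(c - 2*j)) * qb2 n (c - 2*j) + qb2 n (c - 2*j - 1) from rfl]
  rw [mul_add, ← mul_assoc, ← mul_assoc, ← T_add, ← T_add,
    show 4*j^2 + a*j + 2*(c - 2*j) = 2*c + (4*j^2 + (a-4)*j) by ring,
    show c - 2*j - 1 = c - 1 - 2*j by ring]

lemma Ssum_pascalB (n : ℕ) (a c : ℤ) :
    Ssum (n+1) a c = Ssum n a c + T (2*((n:ℤ)+1-c)) * Ssum n (a+4) (c-1) := by
  unfold Ssum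
  rw [mul_finsum' _ _ (support_finite n (c-1) _ (fun j hj => by rw [hj, mul_zero]))]
  rw [← finsum_add_distrib
    (support_finite n c _ (fun j hj => by rw [hj, mul_zero]))
    (support_finite n (c-1) _ (fun j hj => by rw [hj, mul_zero, mul_zero]))]
  refine finsum_congr fun j => ?_
  rw [qb2_pascalB n (c - 2*j)]
  rw [mul_add, ← mul_assoc, ← mul_assoc, ← T_add, ← T_add,
    show 4*j^2 + a*j + 2*((n:ℤ)+1-(c-2*j)) = 2*((n:ℤ)+1-c) + (4*j^2 + (a+4)*j) by ring,
    show c - 2*j - 1 = c - 1 - 2*j by ring]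

lemma Ssum_reflect (n : ℕ) (a c t b d e : ℤ) (hb : b = -(8*t+a)) (hd : d = (n:ℤ) - c + 2*t)
    (he : e = 4*t^2 + a*t) :
    Ssum n a c = T e * Ssum n b d := by
  unfold Ssum
  rw [mul_finsum' _ _ (support_finite n d _ (fun j hj => by rw [hj, mul_zero]))]
  rw [← finsum_comp_equiv (Equiv.subLeft t)]
  refine finsum_congr fun j => ?_
  show T (4*(t-j)^2 + a*(t-j)) * qb2 n (c - 2*(t-j)) = _
  have h1 : qb2 n (c - 2*(t-j)) = qb2 n (d - 2*j) := by
    have := qb2_symm n (c - 2*(t-j))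
    rw [show (n:ℤ) - (c - 2*(t-j)) = d - 2*j by rw [hd]; ring] at this
    exact this.symm
  rw [h1, ← mul_assoc, ← T_add]
  congr 2
  rw [hb, he]; ring


noncomputable def Tsum (n : ℕ) : LaurentPolynomial ℤ := Ssum n (-3) ((n:ℤ)/2 + 1)

lemma Sbar_eq (n : ℕ) : Sbar n = Ssum n (-1) (((n:ℤ)+1)/2) :=
  finsum_congr fun j => by rw [show 4*j^2 - j = 4*j^2 + (-1)*j by ring]

lemma lemA (n : ℕ) : Sbar (n+1) = Sbar n + T ((n:ℤ)+1) * Tsum n := by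
  obtain ⟨m, rfl | rfl⟩ := Nat.even_or_odd' n
  · rw [Sbar_eq, Sbar_eq,
      show (((2*m+1:ℕ):ℤ)+1)/2 = (m:ℤ)+1 by push_cast; omega,
      show (((2*m:ℕ):ℤ)+1)/2 = (m:ℤ) by push_cast; omega]
    unfold Tsum
    rw [show ((2*m:ℕ):ℤ)/2 + 1 = (m:ℤ)+1 by push_cast; omega]
    rw [Ssum_pascalA (2*m) (-1) ((m:ℤ)+1)]
    rw [Ssum_reflect (2*m) (-1-4) ((m:ℤ)+1) 1 (-3) ((m:ℤ)+1) (-1)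
      (by ring) (by push_cast; ring) (by ring)]
    rw [show (m:ℤ)+1-1 = (m:ℤ) by ring, ← mul_assoc, ← T_add,
      show 2*((m:ℤ)+1) + -1 = ((2*m:ℕ):ℤ)+1 by push_cast; ring]
    ring
  · rw [Sbar_eq, Sbar_eq,
      show (((2*m+1+1:ℕ):ℤ)+1)/2 = (m:ℤ)+1 by push_cast; omega,
      show (((2*m+1:ℕ):ℤ)+1)/2 = (m:ℤ)+1 by push_cast; omega]
    unfold Tsum
    rw [show ((2*m+1:ℕ):ℤ)/2 + 1 = (m:ℤ)+1 by push_cast; omega]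
    rw [Ssum_pascalB (2*m+1) (-1) ((m:ℤ)+1)]
    rw [Ssum_reflect (2*m+1) (-1+4) ((m:ℤ)+1-1) 0 (-3) ((m:ℤ)+1) 0
      (by ring) (by push_cast; ring) (by ring), T_zero, one_mul]
    rw [show 2*(((2*m+1:ℕ):ℤ)+1-((m:ℤ)+1)) = ((2*m+1:ℕ):ℤ)+1 by push_cast; ring]

lemma lemB (n : ℕ) : Tsum (n+1) = Tsum n + T (n:ℤ) * Sbar n := by
  obtain ⟨m, rfl | rfl⟩ := Nat.even_or_odd' n
  · unfold Tsum
    rw [Sbar_eq,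
      show ((2*m+1:ℕ):ℤ)/2 + 1 = (m:ℤ)+1 by push_cast; omega,
      show ((2*m:ℕ):ℤ)/2 + 1 = (m:ℤ)+1 by push_cast; omega,
      show (((2*m:ℕ):ℤ)+1)/2 = (m:ℤ) by push_cast; omega]
    rw [Ssum_pascalB (2*m) (-3) ((m:ℤ)+1)]
    rw [Ssum_reflect (2*m) (-3+4) ((m:ℤ)+1-1) 0 (-1) (m:ℤ) 0
      (by ring) (by push_cast; ring) (by ring), T_zero, one_mul]
    rw [show 2*(((2*m:ℕ):ℤ)+1-((m:ℤ)+1)) = ((2*m:ℕ):ℤ) by push_cast; ring]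
  · unfold Tsum
    rw [Sbar_eq,
      show ((2*m+1+1:ℕ):ℤ)/2 + 1 = (m:ℤ)+2 by push_cast; omega,
      show ((2*m+1:ℕ):ℤ)/2 + 1 = (m:ℤ)+1 by push_cast; omega,
      show (((2*m+1:ℕ):ℤ)+1)/2 = (m:ℤ)+1 by push_cast; omega]
    rw [Ssum_pascalA (2*m+1) (-3) ((m:ℤ)+2)]
    rw [Ssum_reflect (2*m+1) (-3-4) ((m:ℤ)+2) 1 (-1) ((m:ℤ)+1) (-3)
      (by ring) (by push_cast; ring) (by ring)]
    rw [show (m:ℤ)+2-1 = (m:ℤ)+1 by ring, ← mul_assoc, ← T_add,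
      show 2*((m:ℤ)+2) + -3 = ((2*m+1:ℕ):ℤ) by push_cast; ring]
    ring


theorem stmt15 (n : ℕ) :
    Sbar (n + 2) - (1 + q) * Sbar (n + 1) + (q - q ^ (2 * n + 2)) * Sbar n = 0 := by
  have hA1 := lemA (n+1)
  have hA0 := lemA n
  have hB := lemB n
  rw [hB] at hA1
  have hq : q ^ (2*n+2) = T (2*(n:ℤ)+2) := by
    rw [q, T_pow]; congr 1; push_cast; ring
  have ht : (T (((n:ℤ)+1)+1) : LaurentPolynomial ℤ) = T 1 * T ((n:ℤ)+1) := by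
    rw [← T_add]; congr 1; ring
  have ht2 : (T (((n:ℤ)+1)+1) : LaurentPolynomial ℤ) * T (n:ℤ) = T (2*(n:ℤ)+2) := by
    rw [← T_add]; congr 1; ring
  rw [show ((n:ℕ)+1+1 : ℕ) = n+2 from rfl] at hA1
  rw [show (((n:ℕ)+1:ℕ):ℤ) = (n:ℤ)+1 by push_cast; ring] at hA1
  rw [hq, q]
  linear_combination hA1 + Sbar n * ht2 - T 1 * hA0 + Tsum n * ht
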